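/- If z⁺ minimizes u ↦ φ(u) + D(u,z) over E, where φ is a proper convex function and D is the Bregman distance associated with a differentiable convex H, then for all u ∈ E: φ(u) + D(u,z) ≥ φ(z⁺) + D(z⁺,z) + D(u,z⁺). -/

import Mathlib

theorem stmt_3 {E : Type*} [NormedAddCommGroup E] [InnerProductSpace ℝ E]
    [FiniteDimensional ℝ E] (H : E → ℝ) (hH : Differentiable ℝ H)
    (hHconv : ConvexOn ℝ Set.univ H)
    (φ : E → ℝ) (hφ : ConvexOn ℝ Set.univ φ)
    (D : E → E → ℝ)
    (hD : ∀ u v, D u v = H u - H v - (inner ℝ (gradient H v) (u - v) : ℝ))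
    (z zplus : E)
    (hmin : ∀ u : E, φ zplus + D zplus z ≤ φ u + D u z) :
    ∀ u : E, φ u + D u z ≥ φ zplus + D zplus z + D u zplus := by
  intro u
  set v := u - zplus with hv
  set gz := gradient H z
  set gp := gradient H zplus
  -- reduce goal to the key inequality
  have key : φ zplus - φ u + (inner ℝ gz v : ℝ) ≤ (inner ℝ gp v : ℝ) := by
    -- derivative of t ↦ H (zplus + t • v) at 0 is ⟪gp, v⟫
    have hline : HasDerivAt (fun t : ℝ => zplus + t • v) v 0 := by
      simpa using ((hasDerivAt_id (0 : ℝ)).smul_const v).const_add zplus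
    have hF : HasDerivAt (fun t : ℝ => H (zplus + t • v)) ((inner ℝ gp v : ℝ)) 0 := by
      have hfd : HasFDerivAt H ((InnerProductSpace.toDual ℝ E) gp) (zplus + (0:ℝ) • v) := by
        simpa [gp, gradient] using (hH zplus).hasGradientAt.hasFDerivAt
      have := hfd.comp_hasDerivAt (0 : ℝ) hline
      exact (by simpa using this : HasDerivAt (H ∘ fun t : ℝ => zplus + t • v) (inner ℝ gp v) 0)
    have hslope : Filter.Tendsto (fun t : ℝ => (H (zplus + t • v) - H zplus) / t)
        (nhdsWithin 0 (Set.Ioi 0)) (nhds ((inner ℝ gp v : ℝ))) := by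
      have := hasDerivAt_iff_tendsto_slope.mp hF
      have h2 := this.mono_left (nhdsWithin_mono 0 (by
        intro t ht
        exact ne_of_gt ht : Set.Ioi (0:ℝ) ⊆ {(0:ℝ)}ᶜ))
      refine h2.congr' ?_
      filter_upwards [self_mem_nhdsWithin] with t ht
      simp [slope_def_field, div_eq_inv_mul]
    refine ge_of_tendsto hslope ?_
    have hIoo : Set.Ioc (0:ℝ) 1 ∈ nhdsWithin 0 (Set.Ioi 0) := by
      apply mem_nhdsWithin.mpr
      exact ⟨Set.Iio 1, isOpen_Iio, by norm_num, by
        intro t ht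
        exact ⟨ht.2, le_of_lt ht.1⟩⟩
    filter_upwards [hIoo] with t ht
    obtain ⟨ht0, ht1⟩ := ht
    set w := zplus + t • v with hw
    have hwconv : w = (1 - t) • zplus + t • u := by
      rw [hw, hv]; module
    have hφw : φ w ≤ (1 - t) * φ zplus + t * φ u := by
      rw [hwconv]
      exact hφ.2 (Set.mem_univ zplus) (Set.mem_univ u) (by linarith) (le_of_lt ht0) (by ring)
    have hm := hmin w
    rw [hD zplus z, hD w z] at hm
    have hinner : (inner ℝ gz (w - z) : ℝ) - (inner ℝ gz (zplus - z) : ℝ) = t * (inner ℝ gz v : ℝ) := by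
      rw [← inner_sub_right]
      have : w - z - (zplus - z) = t • v := by rw [hw]; abel
      rw [this, real_inner_smul_right]
    rw [le_div_iff₀ ht0]
    nlinarith [hm, hφw, hinner]
  -- now expand D and finish
  rw [hD u z, hD zplus z, hD u zplus]
  have h1 : (inner ℝ gz (u - z) : ℝ) = (inner ℝ gz (zplus - z) : ℝ) + (inner ℝ gz v : ℝ) := by
    rw [← inner_add_right]
    congr 1
    rw [hv]; abel
  rw [ge_iff_le]
  rw [h1] at *
  linarith [key]
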